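/- Let θ : ℕ → ℝ be a sequence with θ(k) ≥ 0 for all k, such that for every x ∈ [0,1) the series ∑_{k≥0} θ(k)·x^k converges with sum equal to 1 - 3/((√((4-x)/(1-x)) + 1)² - 1). Then the series ∑_{k≥0} k·θ(k) converges and ∑_{k≥0} k·θ(k) = 1, i.e. θ has mean 1 (it is a critical offspring distribution). -/

import Mathlib

open Real Filter Set Finset

noncomputable def Dd (x : ℝ) : ℝ := 4 - x + 2 * Real.sqrt ((1 - x) * (4 - x))

lemma Dd_ge {x : ℝ} (hx : x ∈ Set.Ico (0:ℝ) 1) : 3 ≤ Dd x := by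
  have h := Real.sqrt_nonneg ((1-x)*(4-x))
  have := hx.2
  unfold Dd; nlinarith

lemma key_alg {x : ℝ} (hx : x ∈ Set.Ico (0:ℝ) 1) :
    3 / ((Real.sqrt ((4 - x) / (1 - x)) + 1) ^ 2 - 1) = 3 * (1 - x) / Dd x := by
  obtain ⟨h0, h1⟩ := hx
  have h1x : 0 < 1 - x := by linarith
  have h4x : 0 < 4 - x := by linarith
  set s := Real.sqrt ((4 - x)/(1 - x)) with hs
  have hs2 : s ^ 2 = (4 - x) / (1 - x) := Real.sq_sqrt (by positivity)
  have hspos : 0 < s := by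
    rw [hs]; exact Real.sqrt_pos.mpr (by positivity)
  have hsplit : s = Real.sqrt (4 - x) / Real.sqrt (1 - x) :=
    Real.sqrt_div h4x.le _
  have hmul : (1 - x) * s = Real.sqrt ((1-x)*(4-x)) := by
    rw [hsplit, Real.sqrt_mul h1x.le]
    rw [div_eq_mul_inv, ← mul_assoc]
    rw [show (1-x) * Real.sqrt (4-x) * (Real.sqrt (1-x))⁻¹
        = ((1-x) / Real.sqrt (1-x)) * Real.sqrt (4-x) by ring]
    rw [Real.div_sqrt]
  have hA : 0 < (s + 1) ^ 2 - 1 := by nlinarith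
  have hDx : Dd x = (1 - x) * ((s + 1) ^ 2 - 1) := by
    have h1 : (1 - x) * s ^ 2 = 4 - x := by
      rw [hs2]; field_simp
    unfold Dd
    rw [← hmul]
    nlinarith [h1]
  have hDpos : 0 < Dd x := by rw [hDx]; positivity
  rw [div_eq_div_iff hA.ne' hDpos.ne', hDx]; ring

lemma Dd_tendsto : Filter.Tendsto Dd (nhdsWithin 1 (Set.Ico (0:ℝ) 1)) (nhds 3) := by
  have hc : Continuous Dd := by
    unfold Dd; fun_prop
  have h2 : Filter.Tendsto Dd (nhdsWithin 1 (Set.Ico (0:ℝ) 1)) (nhds (Dd 1)) :=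
    (hc.tendsto 1).mono_left nhdsWithin_le_nhds
  have hD1 : Dd 1 = 3 := by norm_num [Dd]
  rwa [hD1] at h2

theorem stmt_4 (θ : ℕ → ℝ) (hnn : ∀ k, 0 ≤ θ k)
    (hgen : ∀ x ∈ Set.Ico (0 : ℝ) 1,
      HasSum (fun k : ℕ => θ k * x ^ k)
        (1 - 3 / ((Real.sqrt ((4 - x) / (1 - x)) + 1) ^ 2 - 1))) :
    HasSum (fun k : ℕ => (k : ℝ) * θ k) 1 := by
  have hgen' : ∀ x ∈ Set.Ico (0:ℝ) 1,
      HasSum (fun k : ℕ => θ k * x ^ k) (1 - 3 * (1 - x) / Dd x) := by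
    intro x hx
    rw [← key_alg hx]; exact hgen x hx
  set l := nhdsWithin (1:ℝ) (Set.Ico (0:ℝ) 1) with hl
  have hlne : l.NeBot := by
    rw [hl, ← mem_closure_iff_nhdsWithin_neBot, closure_Ico (by norm_num : (0:ℝ) ≠ 1)]
    exact ⟨by norm_num, le_refl 1⟩
  have hDpos : ∀ x ∈ Set.Ico (0:ℝ) 1, 0 < Dd x := fun x hx => lt_of_lt_of_le (by norm_num) (Dd_ge hx)
  have hfrac : Filter.Tendsto (fun x => 3 * (1 - x) / Dd x) l (nhds 0) := by
    have : Filter.Tendsto (fun x : ℝ => 3 * (1 - x)) l (nhds 0) := by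
      have hc : Continuous (fun x : ℝ => 3 * (1 - x)) := by fun_prop
      have h2 : Filter.Tendsto (fun x : ℝ => 3 * (1 - x)) l (nhds (3 * (1 - 1))) :=
        (hc.tendsto 1).mono_left nhdsWithin_le_nhds
      simpa using h2
    have h3 : Filter.Tendsto (fun x => 3 * (1 - x) / Dd x) l (nhds (0 / 3)) :=
      this.div Dd_tendsto (by norm_num)
    simpa using h3
  -- Step B : HasSum θ 1
  have hθub : ∀ n, ∑ k ∈ Finset.range n, θ k ≤ 1 := by
    intro n
    have htend : Filter.Tendsto (fun x : ℝ => ∑ k ∈ Finset.range n, θ k * x ^ k) l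
        (nhds (∑ k ∈ Finset.range n, θ k)) := by
      have hc : Continuous (fun x : ℝ => ∑ k ∈ Finset.range n, θ k * x ^ k) := by fun_prop
      have h2 : Filter.Tendsto (fun x : ℝ => ∑ k ∈ Finset.range n, θ k * x ^ k) l
          (nhds (∑ k ∈ Finset.range n, θ k * (1:ℝ) ^ k)) :=
        (hc.tendsto 1).mono_left nhdsWithin_le_nhds
      simpa using h2
    refine le_of_tendsto htend (eventually_nhdsWithin_of_forall ?_)
    intro x hx
    have h1 := sum_le_hasSum (Finset.range n)
      (fun i _ => mul_nonneg (hnn i) (pow_nonneg hx.1 i)) (hgen' x hx)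
    have h2 : 0 ≤ 3 * (1 - x) / Dd x := by
      have := hDpos x hx
      have : (0:ℝ) ≤ 3 * (1 - x) := by nlinarith [hx.2]
      positivity
    linarith
  have hθsum : Summable θ := summable_of_sum_range_le hnn hθub
  have hθle : ∑' k, θ k ≤ 1 := hθsum.tsum_le_of_sum_range_le hθub
  have hθge : 1 ≤ ∑' k, θ k := by
    have htend : Filter.Tendsto (fun x => 1 - 3 * (1 - x) / Dd x) l (nhds 1) := by
      simpa using (tendsto_const_nhds.sub hfrac)
    refine le_of_tendsto htend (eventually_nhdsWithin_of_forall ?_)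
    intro x hx
    have h1 : (fun k : ℕ => θ k * x ^ k) ≤ θ := by
      intro k
      calc θ k * x ^ k ≤ θ k * 1 := by
            exact mul_le_mul_of_nonneg_left (pow_le_one₀ hx.1 hx.2.le) (hnn k)
        _ = θ k := mul_one _
    calc 1 - 3 * (1 - x) / Dd x = ∑' k, θ k * x ^ k := (hgen' x hx).tsum_eq.symm
      _ ≤ ∑' k, θ k := Summable.tsum_le_tsum h1 (hgen' x hx).summable hθsum
  have hθ1 : HasSum θ 1 := by
    have : ∑' k, θ k = 1 := le_antisymm hθle hθge
    exact this ▸ hθsum.hasSum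
  -- Step C
  have hP : ∀ x ∈ Set.Ico (0:ℝ) 1,
      HasSum (fun k : ℕ => θ k * ∑ i ∈ Finset.range k, x ^ i) (3 / Dd x) := by
    intro x hx
    have h1x : 0 < 1 - x := by linarith [hx.2]
    have hsub := hθ1.sub (hgen' x hx)
    have heq : (fun k : ℕ => θ k - θ k * x ^ k)
        = fun k : ℕ => (1 - x) * (θ k * ∑ i ∈ Finset.range k, x ^ i) := by
      funext k
      have := geom_sum_mul x k
      linear_combination (θ k) * this
    rw [heq] at hsub
    have hval : 1 - (1 - 3 * (1 - x) / Dd x) = (1 - x) * (3 / Dd x) := by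
      ring
    rw [hval] at hsub
    exact (hasSum_mul_left_iff h1x.ne').mp hsub
  have hterm_le : ∀ x ∈ Set.Ico (0:ℝ) 1, ∀ k : ℕ,
      θ k * ∑ i ∈ Finset.range k, x ^ i ≤ (k:ℝ) * θ k := by
    intro x hx k
    have : ∑ i ∈ Finset.range k, x ^ i ≤ (k:ℝ) := by
      calc ∑ i ∈ Finset.range k, x ^ i ≤ ∑ i ∈ Finset.range k, (1:ℝ) :=
            Finset.sum_le_sum (fun i _ => pow_le_one₀ hx.1 hx.2.le)
        _ = k := by simp
    calc θ k * ∑ i ∈ Finset.range k, x ^ i ≤ θ k * k :=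
          mul_le_mul_of_nonneg_left this (hnn k)
      _ = (k:ℝ) * θ k := mul_comm _ _
  have hfrac1 : Filter.Tendsto (fun x => 3 / Dd x) l (nhds 1) := by
    have := (tendsto_const_nhds (x := (3:ℝ)) (f := l)).div Dd_tendsto (by norm_num)
    norm_num at this
    exact this
  have hub : ∀ n, ∑ k ∈ Finset.range n, (k:ℝ) * θ k ≤ 1 := by
    intro n
    have htend : Filter.Tendsto (fun x : ℝ => ∑ k ∈ Finset.range n, θ k * ∑ i ∈ Finset.range k, x ^ i)
        l (nhds (∑ k ∈ Finset.range n, (k:ℝ) * θ k)) := by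
      have hc : Continuous (fun x : ℝ => ∑ k ∈ Finset.range n, θ k * ∑ i ∈ Finset.range k, x ^ i) := by
        fun_prop
      have h2 : Filter.Tendsto (fun x : ℝ => ∑ k ∈ Finset.range n, θ k * ∑ i ∈ Finset.range k, x ^ i)
          l (nhds (∑ k ∈ Finset.range n, θ k * ∑ i ∈ Finset.range k, (1:ℝ) ^ i)) :=
        (hc.tendsto 1).mono_left nhdsWithin_le_nhds
      have heq : ∑ k ∈ Finset.range n, θ k * ∑ i ∈ Finset.range k, (1:ℝ) ^ i
          = ∑ k ∈ Finset.range n, (k:ℝ) * θ k := by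
        apply Finset.sum_congr rfl
        intro k _
        simp [mul_comm]
      rw [heq] at h2
      exact h2
    refine le_of_tendsto htend (eventually_nhdsWithin_of_forall ?_)
    intro x hx
    have h1 := sum_le_hasSum (Finset.range n)
      (fun i _ => mul_nonneg (hnn i) (Finset.sum_nonneg fun j _ => pow_nonneg hx.1 j)) (hP x hx)
    have h2 : 3 / Dd x ≤ 1 := by
      rw [div_le_one (hDpos x hx)]
      exact Dd_ge hx
    linarith
  have hnn' : ∀ k : ℕ, 0 ≤ (k:ℝ) * θ k := fun k => mul_nonneg (Nat.cast_nonneg k) (hnn k)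
  have hsum : Summable (fun k : ℕ => (k:ℝ) * θ k) := summable_of_sum_range_le hnn' hub
  have hle : ∑' (k:ℕ), (k:ℝ) * θ k ≤ 1 := hsum.tsum_le_of_sum_range_le hub
  have hge : 1 ≤ ∑' (k:ℕ), (k:ℝ) * θ k := by
    refine le_of_tendsto hfrac1 (eventually_nhdsWithin_of_forall ?_)
    intro x hx
    calc 3 / Dd x = ∑' (k:ℕ), θ k * ∑ i ∈ Finset.range k, x ^ i := (hP x hx).tsum_eq.symm
      _ ≤ ∑' (k:ℕ), (k:ℝ) * θ k := Summable.tsum_le_tsum (hterm_le x hx) (hP x hx).summable hsum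
  have : ∑' (k:ℕ), (k:ℝ) * θ k = 1 := le_antisymm hle hge
  exact this ▸ hsum.hasSum
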